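/- Let k ≥ 2 be an integer and let T be a tree on n vertices with diameter n − t, where 2 ≤ t ≤ n − 3. Then α_{k-reg}(T) = max{|D_1(T)|, |D_2(T)|}, i.e., the regular k-independence number of T equals the larger of the number of vertices of degree 1 and the number of vertices of degree 2 in T. -/

import Mathlib

open SimpleGraph

/-- The degree of a vertex `v` in `G`: the number of neighbors of `v`. -/
noncomputable def degN {V : Type*} (G : SimpleGraph V) (v : V) : ℕ := {u | G.Adj v u}.ncard

/-- A set of vertices is `k`-independent if the induced subgraph has maximum degree at
most `k`, i.e. every vertex of the set has at most `k` neighbors inside the set. -/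
def IsKIndepSet {V : Type*} (G : SimpleGraph V) (k : ℕ) (S : Set V) : Prop :=
  ∀ v ∈ S, {u | u ∈ S ∧ G.Adj v u}.ncard ≤ k

/-- A set of vertices is regular if all its vertices have the same degree in `G`. -/
def IsRegularSet {V : Type*} (G : SimpleGraph V) (S : Set V) : Prop :=
  ∀ u ∈ S, ∀ v ∈ S, degN G u = degN G v

/-- The regular `k`-independence number `α_{k-reg}(G)`: the maximum cardinality of a set
of vertices that is both `k`-independent and regular. -/
noncomputable def regKIndepNum {V : Type*} (G : SimpleGraph V) (k : ℕ) : ℕ :=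
  sSup {m : ℕ | ∃ S : Set V, S.ncard = m ∧ IsKIndepSet G k S ∧ IsRegularSet G S}

/-- Endpoint of a walk starting in an adjacency-closed set stays in the set. -/
lemma walk_closed {V : Type*} (G : SimpleGraph V) (S : Set V)
    (hS : ∀ a ∈ S, ∀ b, G.Adj a b → b ∈ S) {a b : V} (p : G.Walk a b) (ha : a ∈ S) :
    b ∈ S := by
  induction p with
  | nil => exact ha
  | cons h _ ih => exact ih (hS _ ha _ h)

lemma degN_eq_degree {V : Type*} [Fintype V] (G : SimpleGraph V) [DecidableRel G.Adj]
    (v : V) : degN G v = G.degree v := by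
  rw [← SimpleGraph.card_neighborSet_eq_degree]
  simp [degN, Set.ncard_eq_toFinset_card', Set.toFinset_card, SimpleGraph.neighborSet,
    Fintype.card_subtype]
  convert (Fintype.card_subtype (G.Adj v)).symm
  exact Fintype.card_congr (Equiv.refl _)

/-- For `k ≥ 2` and a tree `T` on `n` vertices with diameter `n - t`, `2 ≤ t ≤ n - 3`,
the regular `k`-independence number of `T` equals `max {|D_1(T)|, |D_2(T)|}`. -/
theorem stmt_9 {V : Type*} [Fintype V] (T : SimpleGraph V) (hT : T.IsTree)
    (n t k : ℕ) (hk : 2 ≤ k) (hn : Fintype.card V = n) (ht2 : 2 ≤ t) (ht3 : t ≤ n - 3)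
    (hdiam : T.diam = n - t) :
    regKIndepNum T k = max {v : V | degN T v = 1}.ncard {v : V | degN T v = 2}.ncard := by
  classical
  have hn5 : 5 ≤ n := by omega
  have hconn : T.Connected := hT.isConnected
  -- no isolated vertices
  have hpos : ∀ v : V, 1 ≤ degN T v := by
    intro v
    by_contra h
    have h0 : degN T v = 0 := by omega
    have hempty : {u | T.Adj v u} = ∅ := by
      have hfin : {u | T.Adj v u}.Finite := Set.toFinite _
      simp only [degN] at h0
      rwa [Set.ncard_eq_zero hfin] at h0
    have hall : ∀ w : V, w ∈ ({v} : Set V) := by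
      intro w
      obtain ⟨p⟩ := hconn.preconnected v w
      refine walk_closed T {v} ?_ p rfl
      intro a ha b hab
      rw [Set.mem_singleton_iff] at ha; subst ha
      exact absurd (Set.eq_empty_iff_forall_notMem.mp hempty b) (fun h' => h' hab)
    have : Fintype.card V ≤ 1 := by
      have : (Set.univ : Set V) ⊆ {v} := fun w _ => hall w
      calc Fintype.card V = (Set.univ : Set V).ncard := by rw [Set.ncard_univ, Nat.card_eq_fintype_card]
        _ ≤ ({v} : Set V).ncard := Set.ncard_le_ncard this (Set.toFinite _)
        _ = 1 := Set.ncard_singleton v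
    omega
  -- two leaves are never adjacent
  have hleaf : ∀ u v : V, degN T u = 1 → degN T v = 1 → ¬ T.Adj u v := by
    intro u v hu hv hadj
    have hnu : {x | T.Adj u x} = {v} := by
      obtain ⟨a, ha⟩ := Set.ncard_eq_one.mp hu
      have : v ∈ {x | T.Adj u x} := hadj
      rw [ha] at this ⊢
      rw [Set.mem_singleton_iff] at this
      rw [this]
    have hnv : {x | T.Adj v x} = {u} := by
      obtain ⟨a, ha⟩ := Set.ncard_eq_one.mp hv
      have : u ∈ {x | T.Adj v x} := hadj.symm
      rw [ha] at this ⊢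
      rw [Set.mem_singleton_iff] at this
      rw [this]
    have hall : ∀ w : V, w ∈ ({u, v} : Set V) := by
      intro w
      obtain ⟨p⟩ := hconn.preconnected u w
      refine walk_closed T {u, v} ?_ p (Or.inl rfl)
      intro a ha b hab
      rcases ha with ha | ha
      · subst ha
        have : b ∈ {x | T.Adj a x} := hab
        rw [hnu] at this; exact Or.inr this
      · rw [Set.mem_singleton_iff] at ha; subst ha
        have : b ∈ {x | T.Adj a x} := hab
        rw [hnv] at this; exact Or.inl this
    have : Fintype.card V ≤ 2 := by
      have hsub : (Set.univ : Set V) ⊆ {u, v} := fun w _ => hall w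
      calc Fintype.card V = (Set.univ : Set V).ncard := by rw [Set.ncard_univ, Nat.card_eq_fintype_card]
        _ ≤ ({u, v} : Set V).ncard := Set.ncard_le_ncard hsub (Set.toFinite _)
        _ ≤ 2 := (Set.ncard_insert_le _ _).trans (by simp)
    omega
  -- counting: |D_{≥3}| + 2 ≤ |D_1|
  set A : Finset V := Finset.univ.filter (fun v => degN T v = 1) with hA
  set B : Finset V := Finset.univ.filter (fun v => degN T v = 2) with hB
  set C : Finset V := Finset.univ.filter (fun v => 3 ≤ degN T v) with hC
  have hsum : ∑ v, degN T v = 2 * (n - 1) := by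
    have := T.sum_degrees_eq_twice_card_edges
    have hedge : T.edgeFinset.card = n - 1 := by
      have h' := hT.card_edgeFinset
      omega
    calc ∑ v, degN T v = ∑ v, T.degree v := by
          exact Finset.sum_congr rfl (fun v _ => degN_eq_degree T v)
      _ = 2 * T.edgeFinset.card := this
      _ = 2 * (n - 1) := by rw [hedge]
  have hdisjAB : Disjoint A B := by
    simp only [Finset.disjoint_left, hA, hB, Finset.mem_filter]
    rintro a ⟨-, h1⟩ ⟨-, h2⟩; omega
  have hdisjABC : Disjoint (A ∪ B) C := by
    simp only [Finset.disjoint_left, hA, hB, hC, Finset.mem_union, Finset.mem_filter]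
    rintro a (⟨-, h1⟩ | ⟨-, h1⟩) ⟨-, h2⟩ <;> omega
  have hunion : A ∪ B ∪ C = Finset.univ := by
    ext v
    simp only [hA, hB, hC, Finset.mem_union, Finset.mem_filter, Finset.mem_univ, true_and,
      iff_true]
    have := hpos v; omega
  have hcardn : A.card + B.card + C.card = n := by
    rw [← hn, ← Finset.card_univ, ← hunion, Finset.card_union_of_disjoint hdisjABC,
      Finset.card_union_of_disjoint hdisjAB]
  have hsumA : ∑ v ∈ A, degN T v = A.card := by
    rw [Finset.sum_congr rfl (fun v hv => (Finset.mem_filter.mp hv).2)]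
    simp
    rfl
  have hsumB : ∑ v ∈ B, degN T v = 2 * B.card := by
    rw [Finset.sum_congr rfl (fun v hv => (Finset.mem_filter.mp hv).2)]
    simp [mul_comm]
    rfl
  have hsumC : 3 * C.card ≤ ∑ v ∈ C, degN T v := by
    calc 3 * C.card = ∑ _v ∈ C, 3 := by simp [mul_comm]
      _ ≤ ∑ v ∈ C, degN T v :=
        Finset.sum_le_sum (fun v hv => (Finset.mem_filter.mp hv).2)
  have hsplit : ∑ v, degN T v = ∑ v ∈ A, degN T v + ∑ v ∈ B, degN T v + ∑ v ∈ C, degN T v := by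
    rw [← hunion, Finset.sum_union hdisjABC, Finset.sum_union hdisjAB]
  have hkey : C.card + 2 ≤ A.card := by
    rw [hsplit, hsumA, hsumB] at hsum
    omega
  -- relate set ncards to finset cards
  have hAcard : {v : V | degN T v = 1}.ncard = A.card := by
    rw [Set.ncard_eq_toFinset_card']
    congr 1
    ext v; simp [hA]
  have hBcard : {v : V | degN T v = 2}.ncard = B.card := by
    rw [Set.ncard_eq_toFinset_card']
    congr 1
    ext v; simp [hB]
  -- the set of achievable cardinalities
  set M := {m : ℕ | ∃ S : Set V, S.ncard = m ∧ IsKIndepSet T k S ∧ IsRegularSet T S} with hM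
  have hbdd : BddAbove M := by
    refine ⟨n, ?_⟩
    rintro m ⟨S, rfl, -, -⟩
    calc S.ncard ≤ (Set.univ : Set V).ncard :=
          Set.ncard_le_ncard (Set.subset_univ S) (Set.toFinite _)
      _ = n := by rw [Set.ncard_univ, Nat.card_eq_fintype_card, hn]
  have hD1 : {v : V | degN T v = 1}.ncard ∈ M := by
    refine ⟨{v : V | degN T v = 1}, rfl, ?_, ?_⟩
    · intro v hv
      have : {u | u ∈ {v : V | degN T v = 1} ∧ T.Adj v u} = ∅ := by
        ext u
        simp only [Set.mem_setOf_eq, Set.mem_empty_iff_false, iff_false, not_and]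
        intro hu
        exact hleaf v u hv hu
      rw [this, Set.ncard_empty]
      omega
    · intro u hu v hv
      rw [Set.mem_setOf_eq] at hu hv; rw [hu, hv]
  have hD2 : {v : V | degN T v = 2}.ncard ∈ M := by
    refine ⟨{v : V | degN T v = 2}, rfl, ?_, ?_⟩
    · intro v hv
      have hsub : {u | u ∈ {v : V | degN T v = 2} ∧ T.Adj v u} ⊆ {u | T.Adj v u} :=
        fun u hu => hu.2
      calc {u | u ∈ {v : V | degN T v = 2} ∧ T.Adj v u}.ncard
          ≤ {u | T.Adj v u}.ncard := Set.ncard_le_ncard hsub (Set.toFinite _)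
        _ = 2 := hv
        _ ≤ k := hk
    · intro u hu v hv
      rw [Set.mem_setOf_eq] at hu hv; rw [hu, hv]
  apply le_antisymm
  · -- upper bound
    apply csSup_le ⟨_, hD1⟩
    rintro m ⟨S, rfl, hind, hreg⟩
    rcases Set.eq_empty_or_nonempty S with rfl | ⟨v, hv⟩
    · simp
    have hSdeg : ∀ u ∈ S, degN T u = degN T v := fun u hu => hreg u hu v hv
    rcases Nat.lt_or_ge (degN T v) 3 with hlt | hge
    · interval_cases h : degN T v
      · exact absurd (hpos v) (by omega)
      · -- degree 1
        have hsub : S ⊆ {u : V | degN T u = 1} := fun u hu => hSdeg u hu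
        exact le_max_of_le_left (Set.ncard_le_ncard hsub (Set.toFinite _))
      · -- degree 2
        have hsub : S ⊆ {u : V | degN T u = 2} := fun u hu => hSdeg u hu
        exact le_max_of_le_right (Set.ncard_le_ncard hsub (Set.toFinite _))
    · -- degree ≥ 3
      have hsub : S ⊆ (C : Set V) := by
        intro u hu
        simp only [hC, Finset.coe_filter, Set.mem_setOf_eq, Finset.mem_univ, true_and]
        rw [hSdeg u hu]; exact hge
      have : S.ncard ≤ C.card := by
        calc S.ncard ≤ (C : Set V).ncard := Set.ncard_le_ncard hsub (Set.toFinite _)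
          _ = C.card := Set.ncard_coe_finset C
      refine le_max_of_le_left ?_
      rw [hAcard]
      omega
  · exact max_le (le_csSup hbdd hD1) (le_csSup hbdd hD2)
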